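/- Let A be an n×n real symmetric matrix, λ ≠ 0 an eigenvalue of A with unit eigenvector x (Ax = λx, ‖x‖ = 1), and ẽ ∈ ℝⁿ a unit vector orthogonal to x. Then the harmonic Rayleigh quotient θ̃(x + εẽ) = ((x + εẽ)ᵀA²(x + εẽ))/((x + εẽ)ᵀA(x + εẽ)) is defined for all sufficiently small ε > 0 and satisfies θ̃(x + εẽ) − λ − ε² · ẽᵀ(λ⁻¹A² − A)ẽ = O(ε⁴) as ε → 0⁺; that is, there exist constants C, δ > 0 such that |θ̃(x + εẽ) − λ − ε² ẽᵀ(λ⁻¹A² − A)ẽ| ≤ Cε⁴ for all 0 < ε < δ. -/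

import Mathlib

open Matrix

set_option maxHeartbeats 1000000

/-- For an eigenpair `(λ, x)` of the symmetric matrix `A` with `λ ≠ 0`, `‖x‖ = 1`,
and a unit vector `ẽ ⊥ x`, the harmonic Rayleigh quotient
`θ̃(x + εẽ) = ((x+εẽ)ᵀA²(x+εẽ))/((x+εẽ)ᵀA(x+εẽ))` is defined for all sufficiently small
`ε > 0` and `θ̃(x + εẽ) − λ − ε²·ẽᵀ(λ⁻¹A² − A)ẽ = O(ε⁴)` as `ε → 0⁺`. -/
theorem harmonic_rq_second_order_expansion
    {n : ℕ} (A : Matrix (Fin n) (Fin n) ℝ) (hA : A.IsSymm)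
    (lam : ℝ) (hlam : lam ≠ 0)
    (x : Fin n → ℝ) (hx : A.mulVec x = lam • x) (hxnorm : x ⬝ᵥ x = 1)
    (et : Fin n → ℝ) (hetnorm : et ⬝ᵥ et = 1) (horth : et ⬝ᵥ x = 0) :
    ∃ C δ : ℝ, 0 < C ∧ 0 < δ ∧ ∀ ε : ℝ, 0 < ε → ε < δ →
      (x + ε • et) ⬝ᵥ A.mulVec (x + ε • et) ≠ 0 ∧
      |((x + ε • et) ⬝ᵥ (A * A).mulVec (x + ε • et)) /
          ((x + ε • et) ⬝ᵥ A.mulVec (x + ε • et)) -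
        lam - ε^2 * (et ⬝ᵥ (lam⁻¹ • (A * A) - A).mulVec et)| ≤ C * ε^4 := by
  set p := et ⬝ᵥ A.mulVec et with hpdef
  set q := et ⬝ᵥ (A * A).mulVec et with hqdef
  set s := lam⁻¹ * q - p with hsdef
  have hxet : x ⬝ᵥ et = 0 := by rw [dotProduct_comm]; exact horth
  have hsym : ∀ u v : Fin n → ℝ, u ⬝ᵥ A.mulVec v = A.mulVec u ⬝ᵥ v := by
    intro u v
    rw [dotProduct_mulVec, ← Matrix.mulVec_transpose, hA.eq]
  have hA2x : (A * A).mulVec x = (lam ^ 2) • x := by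
    rw [← mulVec_mulVec, hx, mulVec_smul, hx, smul_smul, sq]
  have hxAe : x ⬝ᵥ A.mulVec et = 0 := by
    rw [hsym, hx, smul_dotProduct, hxet, smul_eq_mul, mul_zero]
  have hsym2 : ∀ u v : Fin n → ℝ, u ⬝ᵥ (A * A).mulVec v = (A * A).mulVec u ⬝ᵥ v := by
    intro u v
    rw [dotProduct_mulVec, ← Matrix.mulVec_transpose]
    congr 1
    rw [transpose_mul, hA.eq]
  have hxA2e : x ⬝ᵥ (A * A).mulVec et = 0 := by
    rw [hsym2, hA2x, smul_dotProduct, hxet, smul_eq_mul, mul_zero]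
  have heA2x : et ⬝ᵥ (A * A).mulVec x = 0 := by
    rw [hA2x, dotProduct_smul, horth, smul_eq_mul, mul_zero]
  have hD : ∀ ε : ℝ, (x + ε • et) ⬝ᵥ A.mulVec (x + ε • et) = lam + ε ^ 2 * p := by
    intro ε
    simp only [mulVec_add, mulVec_smul, dotProduct_add, add_dotProduct, smul_dotProduct,
      dotProduct_smul, hx, hxnorm, hxet, horth, hxAe, smul_eq_mul, ← hpdef]
    ring
  have hN : ∀ ε : ℝ, (x + ε • et) ⬝ᵥ (A * A).mulVec (x + ε • et) = lam ^ 2 + ε ^ 2 * q := by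
    intro ε
    simp only [mulVec_add, mulVec_smul, dotProduct_add, add_dotProduct, smul_dotProduct,
      dotProduct_smul, hA2x, hxnorm, hxet, horth, hxA2e, heA2x, smul_eq_mul, ← hqdef]
    ring
  have hS : et ⬝ᵥ (lam⁻¹ • (A * A) - A).mulVec et = s := by
    rw [sub_mulVec, dotProduct_sub, smul_mulVec, dotProduct_smul, smul_eq_mul,
      ← hpdef, ← hqdef, hsdef]
  clear_value p q s
  refine ⟨2 * |s| * |p| / |lam| + 1, min 1 (Real.sqrt (|lam| / (2 * (|p| + 1)))), ?_, ?_, ?_⟩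
  · positivity
  · apply lt_min one_pos
    apply Real.sqrt_pos.mpr
    positivity
  · intro ε hε hεδ
    have habs : ε ^ 2 * |p| < |lam| / 2 := by
      have h1 : ε < Real.sqrt (|lam| / (2 * (|p| + 1))) := lt_of_lt_of_le hεδ (min_le_right _ _)
      have h2 : ε ^ 2 < |lam| / (2 * (|p| + 1)) := by
        have := Real.sq_sqrt (by positivity : (0:ℝ) ≤ |lam| / (2 * (|p| + 1)))
        nlinarith [Real.sqrt_nonneg (|lam| / (2 * (|p| + 1)))]
      have h3 : ε ^ 2 * |p| ≤ ε ^ 2 * (|p| + 1) := by nlinarith [sq_nonneg ε]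
      have h4 : ε ^ 2 * (|p| + 1) < |lam| / 2 := by
        have hp1 : (0:ℝ) < |p| + 1 := by positivity
        calc ε ^ 2 * (|p| + 1) < |lam| / (2 * (|p| + 1)) * (|p| + 1) := by
              exact mul_lt_mul_of_pos_right h2 hp1
          _ = |lam| / 2 := by field_simp
      linarith
    have hDlb : |lam| / 2 ≤ |lam + ε ^ 2 * p| := by
      have h6 : |lam| ≤ |lam + ε ^ 2 * p| + |ε ^ 2 * p| := by
        have := abs_add_le (lam + ε ^ 2 * p) (-(ε ^ 2 * p))
        simp only [add_neg_cancel_right, abs_neg] at this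
        exact this
      have h5 : |ε ^ 2 * p| = ε ^ 2 * |p| := by rw [abs_mul, abs_of_nonneg (sq_nonneg ε)]
      linarith
    have hlampos : 0 < |lam| := abs_pos.mpr hlam
    have hDne : lam + ε ^ 2 * p ≠ 0 := by
      intro h
      rw [h, abs_zero] at hDlb
      linarith
    constructor
    · rw [hD]; exact hDne
    · rw [hD, hN, hS]
      have key : (lam ^ 2 + ε ^ 2 * q) / (lam + ε ^ 2 * p) - lam - ε ^ 2 * s
          = -(ε ^ 4 * s * p) / (lam + ε ^ 2 * p) := by
        rw [hsdef]
        field_simp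
        ring
      rw [key, abs_div, abs_neg]
      have hnum : |ε ^ 4 * s * p| = ε ^ 4 * (|s| * |p|) := by
        rw [abs_mul, abs_mul, abs_of_nonneg (by positivity : (0:ℝ) ≤ ε ^ 4)]
        ring
      rw [hnum]
      have hden : (0:ℝ) < |lam + ε ^ 2 * p| := lt_of_lt_of_le (by linarith) hDlb
      rw [div_le_iff₀ hden]
      have hC1 : ε ^ 4 * (|s| * |p|) ≤ (2 * |s| * |p| / |lam|) * ε ^ 4 * (|lam| / 2) := by
        have : (2 * |s| * |p| / |lam|) * ε ^ 4 * (|lam| / 2) = ε ^ 4 * (|s| * |p|) := by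
          field_simp
        linarith [this.ge]
      calc ε ^ 4 * (|s| * |p|) ≤ (2 * |s| * |p| / |lam|) * ε ^ 4 * (|lam| / 2) := hC1
        _ ≤ (2 * |s| * |p| / |lam|) * ε ^ 4 * |lam + ε ^ 2 * p| := by
            apply mul_le_mul_of_nonneg_left hDlb; positivity
        _ ≤ (2 * |s| * |p| / |lam| + 1) * ε ^ 4 * |lam + ε ^ 2 * p| := by
            have h7 : (0:ℝ) ≤ |lam + ε ^ 2 * p| := abs_nonneg _
            have h8 : 2 * |s| * |p| / |lam| * ε ^ 4 ≤ (2 * |s| * |p| / |lam| + 1) * ε ^ 4 := by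
              have h9 := pow_pos hε 4
              nlinarith
            nlinarith [mul_le_mul_of_nonneg_right h8 h7]
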